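/- Let A be a graded-commutative real algebra and let [·,·] be a differential Gerstenhaber superalgebra bracket on Ω(A). Then the bracket {f, g} := [f, d g] on A makes A a Poisson superalgebra; that is, for homogeneous f, g, h ∈ A: {f,g} = −(−1)^(p(f)p(g)) {g,f}; {f,{g,h}} = {{f,g},h} + (−1)^(p(f)p(g)) {g,{f,h}}; and {f, g h} = {f,g} h + (−1)^(p(f)p(g)) g {f,h}. Moreover [·,·] coincides with the bracket associated to {·,·}, i.e. it satisfies [f, g] = 0, [f, d g] = [d f, g] = {f, g}, and [d f, d g] = d{f, g} for all f, g ∈ A. -/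
import Mathlib


open TensorProduct

namespace SuperPoisson

variable (A : Type) [Ring A] [Algebra ℝ A]

/-- The sign `(−1)^(i·k)` attached to a pair of parities `i, k ∈ ℤ/2`. -/
def sgn (i k : ZMod 2) : ℝ := (-1 : ℝ) ^ (i.val * k.val)

lemma mul'_smul_left (a : A) (ω : A ⊗[ℝ] A) :
    LinearMap.mul' ℝ A (a • ω) = a * LinearMap.mul' ℝ A ω := by
  induction ω using TensorProduct.induction_on with
  | zero => simp
  | tmul x y =>
      rw [TensorProduct.smul_tmul']
      simp [LinearMap.mul'_apply, smul_eq_mul, mul_assoc]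
  | add x y hx hy => rw [smul_add, map_add, map_add, hx, hy, mul_add]

/-- `Ω¹(A)`: the kernel of the multiplication map `m : A ⊗_ℝ A → A`,
as an `A`-submodule of `A ⊗_ℝ A` (with `A` acting on the left tensor factor). -/
def Omega1 : Submodule A (A ⊗[ℝ] A) where
  carrier := {ω | LinearMap.mul' ℝ A ω = 0}
  add_mem' := by
    intro x y hx hy
    simp only [Set.mem_setOf_eq, map_add] at *
    rw [hx, hy, add_zero]
  zero_mem' := by simp
  smul_mem' := by
    intro a ω h
    simp only [Set.mem_setOf_eq] at *
    rw [mul'_smul_left, h, mul_zero]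

/-- The derivation `d a = a ⊗ 1 − 1 ⊗ a`. -/
noncomputable def dO (a : A) : A ⊗[ℝ] A := a ⊗ₜ[ℝ] 1 - 1 ⊗ₜ[ℝ] a

lemma dO_mem (a : A) : dO A a ∈ Omega1 A := by
  show LinearMap.mul' ℝ A (dO A a) = 0
  simp [dO, map_sub]

variable (𝒜 : ZMod 2 → Submodule ℝ A)

/-- The parity-`q` component of `A ⊗ A` (parity inherited from `A`):
the span of tensors `x ⊗ y` with `x, y` homogeneous and `p(x) + p(y) = q`. -/
def tdeg (q : ZMod 2) : Submodule ℝ (A ⊗[ℝ] A) :=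
  Submodule.span ℝ
    {ω | ∃ i k : ZMod 2, ∃ x ∈ 𝒜 i, ∃ y ∈ 𝒜 k, i + k = q ∧ ω = x ⊗ₜ[ℝ] y}

/-- `A` is graded-commutative (supercommutative). -/
def SuperComm : Prop :=
  ∀ i k : ZMod 2, ∀ a ∈ 𝒜 i, ∀ b ∈ 𝒜 k, a * b = sgn i k • (b * a)

/-- `D` is a superderivation of `A` of parity `q`. -/
def IsSuperDer (q : ZMod 2) (D : A →ₗ[ℝ] A) : Prop :=
  ∀ i : ZMod 2, ∀ f ∈ 𝒜 i, ∀ g : A, D (f * g) = D f * g + sgn q i • (f * D g)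

/-- The pairing of a (super)derivation `D` with `1`-forms, determined by
`⟨D, d f⟩ = D f` and `A`-linearity in the form: on a tensor `a ⊗ b ∈ Ω¹(A)`
it is given by `−a·D(b)`. -/
noncomputable def pairD (D : A →ₗ[ℝ] A) : A ⊗[ℝ] A →ₗ[ℝ] A :=
  - (LinearMap.mul' ℝ A ∘ₗ TensorProduct.map LinearMap.id D)

/-- A Lie superalgebroid structure on `Ω¹(A)`: an even `A`-linear anchor
`ρ : Ω¹(A) → Der(A)` and an ℝ-bilinear bracket `⟦·,·⟧` on `Ω¹(A)` which is a Lie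
superbracket satisfying the graded Leibniz rule (both `ρ` and the bracket are
recorded as ℝ-(bi)linear maps on the ambient space `A ⊗ A`; all axioms are
imposed on `Ω¹(A)`). -/
structure LieSuperalgebroid : Type where
  rho : A ⊗[ℝ] A →ₗ[ℝ] A →ₗ[ℝ] A
  br : A ⊗[ℝ] A →ₗ[ℝ] A ⊗[ℝ] A →ₗ[ℝ] A ⊗[ℝ] A
  br_mem : ∀ α ∈ Omega1 A, ∀ β ∈ Omega1 A, br α β ∈ Omega1 A
  rho_Alin : ∀ (a : A), ∀ α ∈ Omega1 A, rho (a • α) = a • rho α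
  rho_der : ∀ q : ZMod 2, ∀ α ∈ Omega1 A, α ∈ tdeg A 𝒜 q → IsSuperDer A 𝒜 q (rho α)
  skew : ∀ i k : ZMod 2, ∀ α ∈ Omega1 A, ∀ β ∈ Omega1 A,
    α ∈ tdeg A 𝒜 i → β ∈ tdeg A 𝒜 k → br α β = -(sgn i k • br β α)
  jacobi : ∀ i k m : ZMod 2, ∀ α ∈ Omega1 A, ∀ β ∈ Omega1 A, ∀ γ ∈ Omega1 A,
    α ∈ tdeg A 𝒜 i → β ∈ tdeg A 𝒜 k → γ ∈ tdeg A 𝒜 m →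
    br α (br β γ) = br (br α β) γ + sgn i k • br β (br α γ)
  leibniz : ∀ i k m : ZMod 2, ∀ α ∈ Omega1 A, α ∈ tdeg A 𝒜 i → ∀ f ∈ 𝒜 k,
    ∀ β ∈ Omega1 A, β ∈ tdeg A 𝒜 m →
    br α (f • β) = (rho α f) • β + sgn i k • (f • br α β)

/-- The anchor of a Lie superalgebroid is skew-supersymmetric:
`α(ρ(β)) = −(−1)^(p(α)p(β)) β(ρ(α))`. -/
def SkewAnchor (L : LieSuperalgebroid A 𝒜) : Prop :=
  ∀ i k : ZMod 2, ∀ α ∈ Omega1 A, ∀ β ∈ Omega1 A,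
    α ∈ tdeg A 𝒜 i → β ∈ tdeg A 𝒜 k →
    pairD A (L.rho β) α = -(sgn i k • pairD A (L.rho α) β)

end SuperPoisson

namespace SuperPoisson

/-- If `[·,·]` is a differential Gerstenhaber superalgebra
bracket on `Ω(A)`, then `{f, g} := [f, d g]` makes `A` a Poisson superalgebra,
and `[·,·]` coincides with the associated bracket on generators:
`[f,g] = 0`, `[f, d g] = [d f, g] = {f,g}`, `[d f, d g] = d{f,g}`. -/
theorem differential_gerstenhaber_gives_poisson
    (A : Type) [Ring A] [Algebra ℝ A] (𝒜 : ZMod 2 → Submodule ℝ A) [GradedAlgebra 𝒜]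
    (hcomm : SuperComm A 𝒜)
    -- A model `Ω` of the algebra `Ω(A) = ⊕_{r} (Ω¹(A))^r` of graded forms:
    (Ω : Type) [Ring Ω] [Algebra ℝ Ω]
    (grade : ℕ → ZMod 2 → Submodule ℝ Ω)
    (hdecomp : DirectSum.IsInternal (fun p : ℕ × ZMod 2 => grade p.1 p.2))
    (hone : (1 : Ω) ∈ grade 0 0)
    (hmul : ∀ (r s : ℕ) (q t : ZMod 2), ∀ x ∈ grade r q, ∀ y ∈ grade s t,
      x * y ∈ grade (r + s) (q + t))
    (hscomm : ∀ (r s : ℕ) (q t : ZMod 2), ∀ x ∈ grade r q, ∀ y ∈ grade s t,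
      x * y = ((-1 : ℝ) ^ (r * s + q.val * t.val)) • (y * x))
    (ι : A →ₐ[ℝ] Ω) (hι_inj : Function.Injective ι)
    (hι_grade : ∀ q : ZMod 2, Submodule.map ι.toLinearMap (𝒜 q) = grade 0 q)
    (j : A ⊗[ℝ] A → Ω)
    (hj_add : ∀ α ∈ Omega1 A, ∀ β ∈ Omega1 A, j (α + β) = j α + j β)
    (hj_smul : ∀ (a : A), ∀ α ∈ Omega1 A, j (a • α) = ι a * j α)
    (hj_inj : ∀ α ∈ Omega1 A, ∀ β ∈ Omega1 A, j α = j β → α = β)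
    (hj_grade : ∀ q : ZMod 2, ∀ α ∈ Omega1 A, α ∈ tdeg A 𝒜 q → j α ∈ grade 1 q)
    (hj_surj : ∀ q : ZMod 2, ∀ x ∈ grade 1 q,
      ∃ α ∈ Omega1 A, α ∈ tdeg A 𝒜 q ∧ j α = x)
    (hgen : Algebra.adjoin ℝ
      (Set.range ι ∪ j '' (Omega1 A : Set (A ⊗[ℝ] A))) = ⊤)
    -- the exterior superderivative on the model `Ω`:
    (dΩ : Ω →ₗ[ℝ] Ω)
    (hd_grade : ∀ (r : ℕ) (q : ZMod 2), ∀ x ∈ grade r q, dΩ x ∈ grade (r + 1) q)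
    (hd_iota : ∀ a : A, dΩ (ι a) = j (dO A a))
    (hd_leib : ∀ (r : ℕ) (q : ZMod 2), ∀ x ∈ grade r q, ∀ y : Ω,
      dΩ (x * y) = dΩ x * y + ((-1 : ℝ) ^ r) • (x * dΩ y))
    (hd_sq : ∀ x : Ω, dΩ (dΩ x) = 0)
    -- a Gerstenhaber superalgebra bracket of ℤ-degree −1 on `Ω(A)`:
    (gb : Ω →ₗ[ℝ] Ω →ₗ[ℝ] Ω)
    (hgb_deg : ∀ (r s : ℕ) (q t : ZMod 2), ∀ x ∈ grade r q, ∀ y ∈ grade s t,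
      (∀ u : ℕ, (u : ℤ) = (r : ℤ) + (s : ℤ) - 1 → gb x y ∈ grade u (q + t)) ∧
      ((r : ℤ) + (s : ℤ) - 1 < 0 → gb x y = 0))
    (hgb_skew : ∀ (r s : ℕ) (q t : ZMod 2), ∀ x ∈ grade r q, ∀ y ∈ grade s t,
      gb x y = -((((-1 : ℝ) ^ (((r : ℤ) - 1) * ((s : ℤ) - 1))) *
        ((-1 : ℝ) ^ (q.val * t.val))) • gb y x))
    (hgb_jac : ∀ (r s u : ℕ) (q t v : ZMod 2),
      ∀ x ∈ grade r q, ∀ y ∈ grade s t, ∀ z ∈ grade u v,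
      gb x (gb y z) = gb (gb x y) z +
        ((((-1 : ℝ) ^ (((r : ℤ) - 1) * ((s : ℤ) - 1))) *
          ((-1 : ℝ) ^ (q.val * t.val))) • gb y (gb x z)))
    (hgb_leib : ∀ (r s u : ℕ) (q t v : ZMod 2),
      ∀ x ∈ grade r q, ∀ y ∈ grade s t, ∀ z ∈ grade u v,
      gb x (y * z) = (gb x y) * z +
        ((((-1 : ℝ) ^ (((r : ℤ) - 1) * (s : ℤ))) *
          ((-1 : ℝ) ^ (q.val * t.val))) • (y * gb x z)))
    -- `[·,·]` is differential:
    (hdiff : ∀ (r s : ℕ) (q t : ZMod 2), ∀ x ∈ grade r q, ∀ y ∈ grade s t,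
      dΩ (gb x y) = gb (dΩ x) y + ((-1 : ℝ) ^ ((r : ℤ) - 1)) • gb x (dΩ y))
    -- `{f, g} := [f, d g]`:
    (pb : A →ₗ[ℝ] A →ₗ[ℝ] A)
    (hpb : ∀ f g : A, ι (pb f g) = gb (ι f) (dΩ (ι g))) :
    -- `(A, {·,·})` is a Poisson superalgebra:
    (∀ i k : ZMod 2, ∀ f ∈ 𝒜 i, ∀ g ∈ 𝒜 k, pb f g ∈ 𝒜 (i + k)) ∧
    (∀ i k : ZMod 2, ∀ f ∈ 𝒜 i, ∀ g ∈ 𝒜 k, pb f g = -(sgn i k • pb g f)) ∧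
    (∀ i k m : ZMod 2, ∀ f ∈ 𝒜 i, ∀ g ∈ 𝒜 k, ∀ h ∈ 𝒜 m,
      pb f (pb g h) = pb (pb f g) h + sgn i k • pb g (pb f h)) ∧
    (∀ i k m : ZMod 2, ∀ f ∈ 𝒜 i, ∀ g ∈ 𝒜 k, ∀ h ∈ 𝒜 m,
      pb f (g * h) = pb f g * h + sgn i k • (g * pb f h)) ∧
    -- and `[·,·]` coincides with the bracket associated to `{·,·}`:
    (∀ f g : A, gb (ι f) (ι g) = 0) ∧
    (∀ f g : A, gb (dΩ (ι f)) (ι g) = ι (pb f g)) ∧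
    (∀ f g : A, gb (dΩ (ι f)) (dΩ (ι g)) = dΩ (ι (pb f g))) := by

  -- basic membership facts
  have himem : ∀ (q : ZMod 2), ∀ a ∈ 𝒜 q, ι a ∈ grade 0 q := by
    intro q a ha
    rw [← hι_grade]
    exact ⟨a, ha, rfl⟩
  have hdmem : ∀ (q : ZMod 2), ∀ a ∈ 𝒜 q, dΩ (ι a) ∈ grade 1 q := by
    intro q a ha
    simpa using hd_grade 0 q (ι a) (himem q a ha)
  -- homogeneous induction
  have hind : ∀ (P : A → Prop), P 0 → (∀ i : ZMod 2, ∀ a ∈ 𝒜 i, P a) →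
      (∀ a b, P a → P b → P (a + b)) → ∀ a, P a := by
    intro P h0 hh hadd a
    exact DirectSum.Decomposition.inductionOn 𝒜 h0 (fun {i} m => hh i m m.2) hadd a
  -- [f, g] = 0
  have L0h : ∀ i k : ZMod 2, ∀ f ∈ 𝒜 i, ∀ g ∈ 𝒜 k, gb (ι f) (ι g) = 0 := by
    intro i k f hf g hg
    exact (hgb_deg 0 0 i k (ι f) (himem i f hf) (ι g) (himem k g hg)).2 (by norm_num)
  have L0 : ∀ f g : A, gb (ι f) (ι g) = 0 := by
    intro f g
    refine hind (fun f => ∀ g, gb (ι f) (ι g) = 0) (by intro g; simp) ?_ ?_ f g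
    · intro i a ha g
      refine hind (fun g => gb (ι a) (ι g) = 0) (by simp) ?_ ?_ g
      · intro k b hb
        exact L0h i k a ha b hb
      · intro b c hb hc
        simp only [map_add, hb, hc, add_zero]
    · intro a b ha hb g
      simp only [map_add, LinearMap.add_apply, ha, hb, add_zero]
  -- [d f, g] = [f, d g] on homogeneous elements
  have key : ∀ i k : ZMod 2, ∀ f ∈ 𝒜 i, ∀ g ∈ 𝒜 k,
      gb (dΩ (ι f)) (ι g) = gb (ι f) (dΩ (ι g)) := by
    intro i k f hf g hg
    have h := hdiff 0 0 i k (ι f) (himem i f hf) (ι g) (himem k g hg)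
    rw [L0h i k f hf g hg, map_zero] at h
    have hpow : ((-1 : ℝ) ^ (((0 : ℕ) : ℤ) - 1)) = -1 := by norm_num
    rw [hpow, neg_one_smul, ← sub_eq_add_neg] at h
    exact sub_eq_zero.mp h.symm
  -- [d f, g] = {f, g}
  have L6h : ∀ i k : ZMod 2, ∀ f ∈ 𝒜 i, ∀ g ∈ 𝒜 k,
      gb (dΩ (ι f)) (ι g) = ι (pb f g) := by
    intro i k f hf g hg
    rw [key i k f hf g hg, ← hpb]
  have L6 : ∀ f g : A, gb (dΩ (ι f)) (ι g) = ι (pb f g) := by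
    intro f g
    refine hind (fun f => ∀ g, gb (dΩ (ι f)) (ι g) = ι (pb f g)) (by intro g; simp) ?_ ?_ f g
    · intro i a ha g
      refine hind (fun g => gb (dΩ (ι a)) (ι g) = ι (pb a g)) (by simp) ?_ ?_ g
      · intro k b hb
        exact L6h i k a ha b hb
      · intro b c hb hc
        simp only [map_add, hb, hc]
    · intro a b ha hb g
      simp only [map_add, LinearMap.add_apply, ha, hb]
  -- [d f, d g] = d {f, g}
  have L7h : ∀ i k : ZMod 2, ∀ f ∈ 𝒜 i, ∀ g ∈ 𝒜 k,
      gb (dΩ (ι f)) (dΩ (ι g)) = dΩ (ι (pb f g)) := by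
    intro i k f hf g hg
    have h := hdiff 1 0 i k (dΩ (ι f)) (hdmem i f hf) (ι g) (himem k g hg)
    rw [hd_sq (ι f), map_zero, LinearMap.zero_apply, zero_add,
      L6h i k f hf g hg] at h
    have hpow : ((-1 : ℝ) ^ (((1 : ℕ) : ℤ) - 1)) = 1 := by norm_num
    rw [hpow, one_smul] at h
    exact h.symm
  have L7 : ∀ f g : A, gb (dΩ (ι f)) (dΩ (ι g)) = dΩ (ι (pb f g)) := by
    intro f g
    refine hind (fun f => ∀ g, gb (dΩ (ι f)) (dΩ (ι g)) = dΩ (ι (pb f g)))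
      (by intro g; simp) ?_ ?_ f g
    · intro i a ha g
      refine hind (fun g => gb (dΩ (ι a)) (dΩ (ι g)) = dΩ (ι (pb a g))) (by simp) ?_ ?_ g
      · intro k b hb
        exact L7h i k a ha b hb
      · intro b c hb hc
        simp only [map_add, hb, hc]
    · intro a b ha hb g
      simp only [map_add, LinearMap.add_apply, ha, hb]
  refine ⟨?_, ?_, ?_, ?_, L0, L6, L7⟩
  · -- parity of pb
    intro i k f hf g hg
    have h := (hgb_deg 0 1 i k (ι f) (himem i f hf) (dΩ (ι g)) (hdmem k g hg)).1 0
      (by norm_num)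
    rw [← hpb, ← hι_grade] at h
    obtain ⟨a, ha, hae⟩ := h
    rwa [← hι_inj hae]
  · -- skew-symmetry
    intro i k f hf g hg
    apply hι_inj
    have hs := hgb_skew 1 0 i k (dΩ (ι f)) (hdmem i f hf) (ι g) (himem k g hg)
    have hpow : ((-1 : ℝ) ^ ((((1 : ℕ) : ℤ) - 1) * (((0 : ℕ) : ℤ) - 1))) = 1 := by norm_num
    rw [hpow, one_mul] at hs
    rw [hpb, ← key i k f hf g hg, hs, ← hpb g f]
    simp [sgn]
  · -- super-Jacobi
    intro i k m f hf g hg h hh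
    apply hι_inj
    have hj := hgb_jac 0 1 1 i k m (ι f) (himem i f hf) (dΩ (ι g)) (hdmem k g hg)
      (dΩ (ι h)) (hdmem m h hh)
    have hpow : ((-1 : ℝ) ^ ((((0 : ℕ) : ℤ) - 1) * (((1 : ℕ) : ℤ) - 1))) = 1 := by norm_num
    rw [hpow, one_mul] at hj
    rw [hpb f (pb g h), ← L7h k m g hg h hh, hj, ← hpb f g, ← hpb f h,
      ← hpb (pb f g) h, L6 g (pb f h)]
    simp [sgn]
  · -- Leibniz
    intro i k m f hf g hg h hh
    apply hι_inj
    have hl1 := hgb_leib 0 1 0 i k m (ι f) (himem i f hf) (dΩ (ι g)) (hdmem k g hg)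
      (ι h) (himem m h hh)
    have hl2 := hgb_leib 0 0 1 i k m (ι f) (himem i f hf) (ι g) (himem k g hg)
      (dΩ (ι h)) (hdmem m h hh)
    rw [L0h i m f hf h hh, mul_zero, smul_zero, add_zero] at hl1
    rw [L0h i k f hf g hg, zero_mul, zero_add] at hl2
    have hz : ((-1 : ℝ) ^ ((((0 : ℕ) : ℤ) - 1) * ((0 : ℕ) : ℤ))) = 1 := by norm_num
    rw [hz, one_mul] at hl2
    rw [hpb f (g * h), map_mul,
      hd_leib 0 k (ι g) (himem k g hg) (ι h), map_add, pow_zero, one_smul,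
      hl1, hl2, ← hpb f g, ← hpb f h]
    simp [sgn, map_add, map_mul, map_smul]


end SuperPoisson
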